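/- Distance of a convolved observable from a sharp one: let E be a sharp (projection-valued) observable on ℝ, η a probability measure on ℝ, and F = η ∗ E the observable with F_ρ = η ∗ E_ρ for all states ρ. Then D_α(F, E) := sup_ρ D_α(F_ρ, E_ρ) = D_α(η, δ_0) = (∫|x|^α dη(x))^{1/α} for 1 ≤ α < ∞. -/

import Mathlib

open MeasureTheory ENNReal

noncomputable section

/-- A coupling of `μ` and `ν`: a measure on the product with the given marginals. -/
def IsCoupling (γ : Measure (ℝ × ℝ)) (μ ν : Measure ℝ) : Prop :=
  γ.map Prod.fst = μ ∧ γ.map Prod.snd = ν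

/-- The Wasserstein distance of order `α` for probability measures on ℝ. -/
def wassersteinDist (α : ℝ) (μ ν : Measure ℝ) : ℝ≥0∞ :=
  ⨅ γ ∈ {γ : Measure (ℝ × ℝ) | IsProbabilityMeasure γ ∧ IsCoupling γ μ ν},
    (∫⁻ p, edist p.1 p.2 ^ α ∂γ) ^ (1 / α)

/-- Convolution of measures on ℝ: the law of the sum of independent random variables. -/
def mconv (η μ : Measure ℝ) : Measure ℝ :=
  (η.prod μ).map fun p => p.1 + p.2

lemma measurable_edist_rpow (q α : ℝ) : Measurable fun x : ℝ => edist x q ^ α :=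
  (measurable_id.edist measurable_const).pow_const α

/-- Wasserstein distance to a Dirac measure is the `α`-moment about the point. -/
lemma wass_dirac (α : ℝ) (μ : Measure ℝ) [IsProbabilityMeasure μ] (q : ℝ) :
    wassersteinDist α μ (Measure.dirac q) = (∫⁻ x, edist x q ^ α ∂μ) ^ (1 / α) := by
  have hγ₀ : (μ.prod (Measure.dirac q)) ∈
      {γ : Measure (ℝ × ℝ) | IsProbabilityMeasure γ ∧ IsCoupling γ μ (Measure.dirac q)} := by
    refine ⟨inferInstance, ?_, ?_⟩
    · simp [Measure.map_fst_prod]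
    · simp [Measure.map_snd_prod]
  have key : ∀ γ ∈ {γ : Measure (ℝ × ℝ) | IsProbabilityMeasure γ ∧
      IsCoupling γ μ (Measure.dirac q)},
      (∫⁻ p, edist p.1 p.2 ^ α ∂γ) ^ (1 / α) = (∫⁻ x, edist x q ^ α ∂μ) ^ (1 / α) := by
    rintro γ ⟨hp, hfst, hsnd⟩
    have hae : ∀ᵐ p : ℝ × ℝ ∂γ, p.2 = q := by
      have : γ (Prod.snd ⁻¹' {q}ᶜ) = 0 := by
        rw [← Measure.map_apply measurable_snd (measurableSet_singleton q).compl, hsnd]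
        simp
      filter_upwards [measure_eq_zero_iff_ae_notMem.mp this] with p hp
      simpa using hp
    have h1 : (∫⁻ p : ℝ × ℝ, edist p.1 p.2 ^ α ∂γ) = ∫⁻ p : ℝ × ℝ, edist p.1 q ^ α ∂γ := by
      refine lintegral_congr_ae ?_
      filter_upwards [hae] with p hp using by rw [hp]
    have h2 : (∫⁻ p : ℝ × ℝ, edist p.1 q ^ α ∂γ) = ∫⁻ x, edist x q ^ α ∂μ := by
      rw [← hfst, lintegral_map (measurable_edist_rpow q α) measurable_fst]
    rw [h1, h2]
  refine le_antisymm ?_ ?_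
  · exact (biInf_le _ hγ₀).trans_eq (key _ hγ₀)
  · exact le_iInf₂ fun γ hγ => (key γ hγ).ge

/-- Upper bound: the distance of `η ∗ μ` from `μ` is at most the `α`-moment of `η`. -/
lemma wass_conv_le (α : ℝ) (η μ : Measure ℝ) [IsProbabilityMeasure η]
    [IsProbabilityMeasure μ] :
    wassersteinDist α (mconv η μ) μ ≤ (∫⁻ x, edist x 0 ^ α ∂η) ^ (1 / α) := by
  set γ : Measure (ℝ × ℝ) := (η.prod μ).map fun p => (p.1 + p.2, p.2) with hγdef
  have hm : Measurable fun p : ℝ × ℝ => (p.1 + p.2, p.2) :=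
    (measurable_fst.add measurable_snd).prodMk measurable_snd
  have hγmem : γ ∈ {γ : Measure (ℝ × ℝ) | IsProbabilityMeasure γ ∧
      IsCoupling γ (mconv η μ) μ} := by
    refine ⟨MeasureTheory.Measure.isProbabilityMeasure_map hm.aemeasurable, ?_, ?_⟩
    · rw [hγdef, Measure.map_map measurable_fst hm]
      rfl
    · rw [hγdef, Measure.map_map measurable_snd hm]
      have : (Prod.snd ∘ fun p : ℝ × ℝ => (p.1 + p.2, p.2)) = Prod.snd := rfl
      rw [this, Measure.map_snd_prod]
      simp
  refine (biInf_le _ hγmem).trans_eq ?_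
  have h1 : (∫⁻ p : ℝ × ℝ, edist p.1 p.2 ^ α ∂γ) =
      ∫⁻ p : ℝ × ℝ, edist (p.1 + p.2) p.2 ^ α ∂(η.prod μ) := by
    rw [hγdef, lintegral_map ((measurable_fst.edist measurable_snd).pow_const α) hm]
  have h2 : (∫⁻ p : ℝ × ℝ, edist (p.1 + p.2) p.2 ^ α ∂(η.prod μ)) =
      ∫⁻ p : ℝ × ℝ, edist p.1 0 ^ α ∂(η.prod μ) := by
    refine lintegral_congr fun p => ?_
    have : edist (p.1 + p.2) (0 + p.2) = edist p.1 0 := edist_add_right _ _ _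
    rw [← this, zero_add]
  have h3 : (∫⁻ p : ℝ × ℝ, edist p.1 0 ^ α ∂(η.prod μ)) = ∫⁻ x, edist x 0 ^ α ∂η := by
    have := lintegral_map (μ := η.prod μ) (measurable_edist_rpow 0 α) measurable_fst
    rw [← this, Measure.map_fst_prod]
    simp
  rw [h1, h2, h3]

/-- Lower bound: triangle-type estimate through a point `q` where `μ` is concentrated. -/
lemma wass_conv_ge (α : ℝ) (hα : 1 ≤ α) (η μ : Measure ℝ) [IsProbabilityMeasure η]
    [IsProbabilityMeasure μ] (q : ℝ) :
    (∫⁻ x, edist x 0 ^ α ∂η) ^ (1 / α) ≤ wassersteinDist α (mconv η μ) μ +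
      ((∫⁻ x, edist x q ^ α ∂μ) ^ (1 / α) + (∫⁻ x, edist x q ^ α ∂μ) ^ (1 / α)) := by
  set Mq : ℝ≥0∞ := (∫⁻ x, edist x q ^ α ∂μ) ^ (1 / α) with hMq
  set Mη : ℝ≥0∞ := (∫⁻ x, edist x 0 ^ α ∂η) ^ (1 / α) with hMη
  have hα0 : (0 : ℝ) ≤ 1 / α := by positivity
  -- Step 2 : Mη ≤ M_q(mconv η μ) + Mq
  have step2 : Mη ≤ (∫⁻ z, edist z q ^ α ∂(mconv η μ)) ^ (1 / α) + Mq := by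
    set θ := η.prod μ with hθ
    have hadd : Measurable fun p : ℝ × ℝ => p.1 + p.2 := measurable_fst.add measurable_snd
    have hconv : (∫⁻ z, edist z q ^ α ∂(mconv η μ)) =
        ∫⁻ p : ℝ × ℝ, edist (p.1 + p.2) q ^ α ∂θ := by
      rw [mconv, lintegral_map (measurable_edist_rpow q α) hadd]
    have hμ : (∫⁻ x, edist x q ^ α ∂μ) = ∫⁻ p : ℝ × ℝ, edist p.2 q ^ α ∂θ := by
      have := lintegral_map (μ := θ) (measurable_edist_rpow q α) measurable_snd
      rw [← this, hθ, Measure.map_snd_prod]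
      simp
    have hη : (∫⁻ x, edist x 0 ^ α ∂η) = ∫⁻ p : ℝ × ℝ, edist p.1 0 ^ α ∂θ := by
      have := lintegral_map (μ := θ) (measurable_edist_rpow 0 α) measurable_fst
      rw [← this, hθ, Measure.map_fst_prod]
      simp
    have hpt : ∀ p : ℝ × ℝ, edist p.1 0 ≤ edist (p.1 + p.2) q + edist p.2 q := by
      intro p
      have h1 : edist p.1 0 = edist (p.1 + p.2) p.2 := by
        rw [← edist_add_right p.1 0 p.2, zero_add]
      calc edist p.1 0 = edist (p.1 + p.2) p.2 := h1
        _ ≤ edist (p.1 + p.2) q + edist q p.2 := edist_triangle _ _ _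
        _ = edist (p.1 + p.2) q + edist p.2 q := by rw [edist_comm q]
    have hmono : (∫⁻ p : ℝ × ℝ, edist p.1 0 ^ α ∂θ) ≤
        ∫⁻ p : ℝ × ℝ, ((fun p : ℝ × ℝ => edist (p.1 + p.2) q) p +
          (fun p : ℝ × ℝ => edist p.2 q) p) ^ α ∂θ := by
      refine lintegral_mono fun p => ?_
      exact ENNReal.rpow_le_rpow (hpt p) (le_trans zero_le_one hα)
    have hmink := ENNReal.lintegral_Lp_add_le (μ := θ)
      (f := fun p : ℝ × ℝ => edist (p.1 + p.2) q) (g := fun p : ℝ × ℝ => edist p.2 q)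
      ((hadd.edist measurable_const).aemeasurable)
      ((measurable_snd.edist measurable_const).aemeasurable) hα
    calc Mη = (∫⁻ p : ℝ × ℝ, edist p.1 0 ^ α ∂θ) ^ (1 / α) := by rw [hMη, hη]
      _ ≤ (∫⁻ p : ℝ × ℝ, ((fun p : ℝ × ℝ => edist (p.1 + p.2) q) p +
            (fun p : ℝ × ℝ => edist p.2 q) p) ^ α ∂θ) ^ (1 / α) :=
          ENNReal.rpow_le_rpow hmono hα0
      _ ≤ (∫⁻ p : ℝ × ℝ, edist (p.1 + p.2) q ^ α ∂θ) ^ (1 / α) +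
            (∫⁻ p : ℝ × ℝ, edist p.2 q ^ α ∂θ) ^ (1 / α) := hmink
      _ = (∫⁻ z, edist z q ^ α ∂(mconv η μ)) ^ (1 / α) + Mq := by
          rw [hconv, hMq, hμ]
  -- Step 1 : for any coupling γ, M_q(mconv η μ) ≤ cost(γ)^{1/α} + Mq
  have step1 : ∀ γ ∈ {γ : Measure (ℝ × ℝ) | IsProbabilityMeasure γ ∧
      IsCoupling γ (mconv η μ) μ},
      (∫⁻ z, edist z q ^ α ∂(mconv η μ)) ^ (1 / α) ≤
        (∫⁻ p, edist p.1 p.2 ^ α ∂γ) ^ (1 / α) + Mq := by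
    rintro γ ⟨hp, hfst, hsnd⟩
    have hF : (∫⁻ z, edist z q ^ α ∂(mconv η μ)) = ∫⁻ p : ℝ × ℝ, edist p.1 q ^ α ∂γ := by
      rw [← hfst, lintegral_map (measurable_edist_rpow q α) measurable_fst]
    have hμ2 : (∫⁻ x, edist x q ^ α ∂μ) = ∫⁻ p : ℝ × ℝ, edist p.2 q ^ α ∂γ := by
      rw [← hsnd, lintegral_map (measurable_edist_rpow q α) measurable_snd]
    have hmono : (∫⁻ p : ℝ × ℝ, edist p.1 q ^ α ∂γ) ≤
        ∫⁻ p : ℝ × ℝ, ((fun p : ℝ × ℝ => edist p.1 p.2) p +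
          (fun p : ℝ × ℝ => edist p.2 q) p) ^ α ∂γ := by
      refine lintegral_mono fun p => ?_
      exact ENNReal.rpow_le_rpow (edist_triangle _ _ _) (le_trans zero_le_one hα)
    have hmink := ENNReal.lintegral_Lp_add_le (μ := γ)
      (f := fun p : ℝ × ℝ => edist p.1 p.2) (g := fun p : ℝ × ℝ => edist p.2 q)
      ((measurable_fst.edist measurable_snd).aemeasurable)
      ((measurable_snd.edist measurable_const).aemeasurable) hα
    calc (∫⁻ z, edist z q ^ α ∂(mconv η μ)) ^ (1 / α)
        = (∫⁻ p : ℝ × ℝ, edist p.1 q ^ α ∂γ) ^ (1 / α) := by rw [hF]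
      _ ≤ (∫⁻ p : ℝ × ℝ, ((fun p : ℝ × ℝ => edist p.1 p.2) p +
            (fun p : ℝ × ℝ => edist p.2 q) p) ^ α ∂γ) ^ (1 / α) :=
          ENNReal.rpow_le_rpow hmono hα0
      _ ≤ (∫⁻ p : ℝ × ℝ, edist p.1 p.2 ^ α ∂γ) ^ (1 / α) +
            (∫⁻ p : ℝ × ℝ, edist p.2 q ^ α ∂γ) ^ (1 / α) := hmink
      _ = (∫⁻ p, edist p.1 p.2 ^ α ∂γ) ^ (1 / α) + Mq := by rw [hMq, hμ2]
  -- combine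
  have hW : (∫⁻ z, edist z q ^ α ∂(mconv η μ)) ^ (1 / α) ≤
      wassersteinDist α (mconv η μ) μ + Mq := by
    rw [wassersteinDist]
    rw [← tsub_le_iff_right]
    refine le_iInf₂ fun γ hγ => ?_
    rw [tsub_le_iff_right]
    exact step1 γ hγ
  calc Mη ≤ (∫⁻ z, edist z q ^ α ∂(mconv η μ)) ^ (1 / α) + Mq := step2
    _ ≤ wassersteinDist α (mconv η μ) μ + Mq + Mq := add_le_add_left hW Mq
    _ = wassersteinDist α (mconv η μ) μ + (Mq + Mq) := by rw [add_assoc]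

/-- Distance of a convolved observable from a sharp one. An observable is modelled as
a map from states to outcome probability distributions; `F = η ∗ E` adds the noise `η`.
Sharpness of `E` enters through the property that its distributions can be concentrated
arbitrarily close to a point. Then
`D_α(F, E) = sup_ρ D_α(F_ρ, E_ρ) = D_α(η, δ_0) = (∫|x|^α dη)^{1/α}`. -/
theorem dist_of_convolved_observable
    {S : Type*} [Nonempty S] (α : ℝ) (hα : 1 ≤ α)
    (η : Measure ℝ) [IsProbabilityMeasure η]
    (E : S → Measure ℝ) (hE : ∀ ρ, IsProbabilityMeasure (E ρ))
    (hsharp : ∀ ε : ℝ≥0∞, 0 < ε →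
      ∃ (ρ : S) (q : ℝ), wassersteinDist α (E ρ) (Measure.dirac q) ≤ ε) :
    (⨆ ρ : S, wassersteinDist α (mconv η (E ρ)) (E ρ)) =
      wassersteinDist α η (Measure.dirac 0) ∧
    wassersteinDist α η (Measure.dirac 0) = (∫⁻ x, edist x 0 ^ α ∂η) ^ (1 / α) := by
  have hd0 : wassersteinDist α η (Measure.dirac 0) = (∫⁻ x, edist x 0 ^ α ∂η) ^ (1 / α) :=
    wass_dirac α η 0
  refine ⟨?_, hd0⟩
  refine le_antisymm ?_ ?_
  · refine iSup_le fun ρ => ?_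
    have := hE ρ
    exact (wass_conv_le α η (E ρ)).trans_eq hd0.symm
  · rw [hd0]
    refine ENNReal.le_of_forall_pos_le_add fun ε hε _ => ?_
    have hε2 : (0 : ℝ≥0∞) < (ε : ℝ≥0∞) / 2 := by
      simp only [ENNReal.div_pos_iff]
      exact ⟨by exact_mod_cast hε.ne', by norm_num⟩
    obtain ⟨ρ, q, hq⟩ := hsharp ((ε : ℝ≥0∞) / 2) hε2
    have := hE ρ
    have hMq : (∫⁻ x, edist x q ^ α ∂(E ρ)) ^ (1 / α) ≤ (ε : ℝ≥0∞) / 2 := by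
      rw [← wass_dirac α (E ρ) q]
      exact hq
    calc (∫⁻ x, edist x 0 ^ α ∂η) ^ (1 / α)
        ≤ wassersteinDist α (mconv η (E ρ)) (E ρ) +
            ((∫⁻ x, edist x q ^ α ∂(E ρ)) ^ (1 / α) +
              (∫⁻ x, edist x q ^ α ∂(E ρ)) ^ (1 / α)) := wass_conv_ge α hα η (E ρ) q
      _ ≤ (⨆ ρ : S, wassersteinDist α (mconv η (E ρ)) (E ρ)) +
            ((ε : ℝ≥0∞) / 2 + (ε : ℝ≥0∞) / 2) :=
          add_le_add (le_iSup (fun ρ => wassersteinDist α (mconv η (E ρ)) (E ρ)) ρ)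
            (add_le_add hMq hMq)
      _ = (⨆ ρ : S, wassersteinDist α (mconv η (E ρ)) (E ρ)) + ε := by
          rw [ENNReal.add_halves]
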